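/- arXiv:2108.07677 — 3 statements merged into one kernel-verified Lean document; each statement's English description precedes it below -/
import Mathlib

section
/- The derivative of the Riemann zeta function at s = 0 equals -(1/2)·log(2π); equivalently, exp(-ζ'(0)) = √(2π), which expresses the zeta-regularized product ∏_{n=1}^∞ n = √(2π). -/
open Complex Real

noncomputable def myPsi (s : ℂ) : ℂ := (π : ℂ) ^ (s / 2) * (Complex.Gamma (s / 2 + 1))⁻¹

lemma myPsi_zero : myPsi 0 = 1 := by
  simp [myPsi, Complex.Gamma_one]

lemma hasDerivAt_myPsi :
    HasDerivAt myPsi ((Complex.log π + Real.eulerMascheroniConstant) / 2) 0 := by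
  have h1 : HasDerivAt (fun s : ℂ => (π : ℂ) ^ (s / 2))
      ((π : ℂ) ^ ((0 : ℂ) / 2) * Complex.log π * (1 / 2)) 0 :=
    ((hasDerivAt_id (0 : ℂ)).div_const 2).const_cpow
      (Or.inl (Complex.ofReal_ne_zero.mpr Real.pi_ne_zero))
  have h2 : HasDerivAt (fun s : ℂ => Complex.Gamma (s / 2 + 1))
      (-(Real.eulerMascheroniConstant : ℂ) * (1 / 2)) 0 := by
    have hg : HasDerivAt (fun s : ℂ => s / 2 + 1) (1 / 2) 0 :=
      ((hasDerivAt_id (0 : ℂ)).div_const 2).add_const 1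
    have h1' := Complex.hasDerivAt_Gamma_one
    rw [show (1 : ℂ) = 0 / 2 + 1 by norm_num] at h1'
    exact h1'.comp (0 : ℂ) hg
  have h3 : HasDerivAt (fun s : ℂ => (Complex.Gamma (s / 2 + 1))⁻¹)
      (-(-(Real.eulerMascheroniConstant : ℂ) * (1 / 2)) /
        (Complex.Gamma ((0 : ℂ) / 2 + 1)) ^ 2) 0 := by
    apply h2.inv
    simp [Complex.Gamma_one]
  have := h1.mul h3
  convert this using 1
  · rfl
  · rfl
  · rfl
  simp [Complex.Gamma_one]
  ring

namespace Paper

/-- The derivative of the Riemann zeta function at `s = 0` equals `-(1/2) · log (2π)`;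
equivalently `exp (-ζ'(0)) = √(2π)`, expressing the zeta-regularized product
`∏_{n=1}^∞ n = √(2π)`. -/
theorem deriv_riemannZeta_zero :
    deriv riemannZeta 0 = -(1 / 2 : ℂ) * Real.log (2 * Real.pi) ∧
    Complex.exp (-(deriv riemannZeta 0)) = (Real.sqrt (2 * Real.pi) : ℂ) := by
  set g : ℂ → ℂ := fun s => s / 2 * completedRiemannZeta₀ s * myPsi s - myPsi s / 2 -
    s * myPsi s / (2 * (1 - s)) with hg_def
  -- ζ = g near 0
  have key : ∀ s : ℂ, ‖s‖ < 1 → riemannZeta s = g s := by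
    intro s hs
    rcases eq_or_ne s 0 with rfl | hs0
    · simp [hg_def, myPsi_zero, riemannZeta_zero]
      norm_num
    · have h1 : (1 : ℂ) - s ≠ 0 := by
        intro h
        have : s = 1 := by linear_combination -h
        rw [this] at hs; simp at hs
      have hΓ : Complex.Gamma (s / 2 + 1) ≠ 0 := by
        apply Complex.Gamma_ne_zero
        intro m h
        have hs' : s = -2 * ((m : ℂ) + 1) := by linear_combination 2 * h
        have : ‖s‖ = 2 * ((m : ℝ) + 1) := by
          rw [hs', show ((-2 : ℂ) * ((m : ℂ) + 1)) = ((-2 * ((m : ℝ) + 1) : ℝ) : ℂ) by push_cast; ring,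
            Complex.norm_real, Real.norm_eq_abs, abs_of_nonpos (by nlinarith [Nat.cast_nonneg (α := ℝ) m])]
          ring
        nlinarith [Nat.cast_nonneg (α := ℝ) m]
      have hπ : (π : ℂ) ^ (s / 2) ≠ 0 := by
        simp only [ne_eq, Complex.cpow_eq_zero_iff, not_and_or, not_not]
        exact Or.inl (Complex.ofReal_ne_zero.mpr Real.pi_ne_zero)
      have hΓ2 : Complex.Gamma (s / 2 + 1) = s / 2 * Complex.Gamma (s / 2) :=
        Complex.Gamma_add_one _ (by simpa using hs0)
      rw [riemannZeta_def_of_ne_zero hs0, completedRiemannZeta_eq, Gammaℝ_def, hg_def]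
      have hcn : (π : ℂ) ^ (-s / 2) = ((π : ℂ) ^ (s / 2))⁻¹ := by
        rw [neg_div, Complex.cpow_neg]
      rw [hcn]
      have hs2 : s / 2 ≠ 0 := by simpa using hs0
      have hΓ3 : Complex.Gamma (s / 2) = Complex.Gamma (s / 2 + 1) / (s / 2) :=
        (eq_div_iff hs2).mpr (by rw [hΓ2]; ring)
      rw [hΓ3]
      simp only [myPsi]
      set x := (π : ℂ) ^ (s / 2) with hx
      set G := Complex.Gamma (s / 2 + 1) with hGd
      field_simp
  have heq : riemannZeta =ᶠ[nhds 0] g := by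
    filter_upwards [Metric.ball_mem_nhds (0 : ℂ) one_pos] with s hs
    exact key s (by simpa using hs)
  have hd1 : deriv riemannZeta 0 = deriv g 0 := heq.deriv_eq
  -- compute deriv g 0
  have ha : HasDerivAt completedRiemannZeta₀ (deriv completedRiemannZeta₀ 0) 0 :=
    (differentiable_completedZeta₀ 0).hasDerivAt
  have hψ := hasDerivAt_myPsi
  set p : ℂ := (Complex.log π + Real.eulerMascheroniConstant) / 2 with hp
  set a : ℂ := deriv completedRiemannZeta₀ 0 with haa
  have hA : HasDerivAt (fun s : ℂ => s / 2 * completedRiemannZeta₀ s * myPsi s)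
      ((1 / 2 * completedRiemannZeta₀ 0 + (0 : ℂ) / 2 * a) * myPsi 0 +
        (0 : ℂ) / 2 * completedRiemannZeta₀ 0 * p) 0 := by
    exact ((((hasDerivAt_id (0 : ℂ)).div_const 2).mul ha).mul hψ)
  have hB : HasDerivAt (fun s : ℂ => myPsi s / 2) (p / 2) 0 := hψ.div_const 2
  have hden : HasDerivAt (fun s : ℂ => 2 * (1 - s)) (2 * (-1)) 0 :=
    ((hasDerivAt_id (0 : ℂ)).const_sub 1).const_mul 2
  have hC : HasDerivAt (fun s : ℂ => s * myPsi s / (2 * (1 - s)))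
      (((1 * myPsi 0 + 0 * p) * (2 * (1 - 0)) - 0 * myPsi 0 * (2 * (-1))) /
        (2 * (1 - (0 : ℂ))) ^ 2) 0 :=
    ((hasDerivAt_id (0 : ℂ)).mul hψ).div hden (by norm_num)
  have hG : HasDerivAt g _ 0 := (hA.sub hB).sub hC
  have hΛ0 : completedRiemannZeta₀ 0 =
      (Real.eulerMascheroniConstant - Complex.log (4 * π)) / 2 + 1 := by
    have := completedRiemannZeta₀_one_sub 1
    simp at this
    rw [this, completedRiemannZeta₀_one]
  have hd2 : deriv g 0 = -(1 / 2 : ℂ) * Real.log (2 * Real.pi) := by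
    rw [hG.deriv, myPsi_zero, hΛ0, hp]
    have l1 : Complex.log (4 * π) = (Real.log (4 * π) : ℂ) := by
      rw [show ((4 : ℂ) * π) = ((4 * π : ℝ) : ℂ) by push_cast; ring,
        Complex.ofReal_log (by positivity)]
    have l2 : Complex.log π = (Real.log π : ℂ) := Complex.ofReal_log Real.pi_pos.le ▸ rfl
    have l4 : Real.log (4 * π) + Real.log π = Real.log (2 * π) * 2 := by
      rw [show (4 : ℝ) * π = (2 * π) * 2 by ring, Real.log_mul (by positivity) two_ne_zero,
        Real.log_mul two_ne_zero Real.pi_ne_zero]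
      ring
    rw [l1, l2]
    have l5 : (Real.log (4 * π) : ℂ) + (Real.log π : ℂ) = (Real.log (2 * π) : ℂ) * 2 := by
      exact_mod_cast congrArg (Complex.ofReal ·) l4
    linear_combination (-1 / 4 : ℂ) * l5
  constructor
  · rw [hd1, hd2]
  · rw [hd1, hd2]
    have : Real.sqrt (2 * π) = Real.exp (Real.log (2 * π) * (1 / 2)) := by
      rw [Real.sqrt_eq_rpow, Real.rpow_def_of_pos (by positivity)]
    rw [this]
    rw [show -(-(1 / 2 : ℂ) * (Real.log (2 * Real.pi) : ℂ)) =
        ((Real.log (2 * Real.pi) * (1 / 2) : ℝ) : ℂ) by push_cast; ring,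
      Complex.ofReal_exp]

end Paper
end

section
/- Let N be a positive natural number, let x be a complex number with Re(x) > 0, and let s be a complex number with Re(s) > N. Then the family (m₁,…,m_N) ↦ (x + m₁ + ⋯ + m_N)^{-s}, indexed by N-tuples of natural numbers (i.e. by functions Fin N → ℕ), is absolutely summable. -/
open Complex
open scoped Real

lemma barnes_aux_prod_summable (f : ℕ → ℝ) (hf : Summable f) (h0 : ∀ n, 0 ≤ f n) :
    ∀ N : ℕ, Summable fun m : Fin N → ℕ => ∏ j, f (m j) := by
  intro N
  induction N with
  | zero =>
    haveI : Unique (Fin 0 → ℕ) := Pi.uniqueOfIsEmpty _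
    exact Summable.of_finite
  | succ N ih =>
    have key : Summable fun p : ℕ × (Fin N → ℕ) => f p.1 * ∏ j, f (p.2 j) :=
      Summable.mul_of_nonneg (f := f) (g := fun m : Fin N → ℕ => ∏ j, f (m j)) hf ih h0
        (fun m => Finset.prod_nonneg fun j _ => h0 _)
    rw [← (Fin.consEquiv fun _ : Fin (N + 1) => ℕ).summable_iff]
    refine key.congr fun p => ?_
    simp [Fin.consEquiv, Fin.prod_univ_succ]

/-- For `N ≥ 1`, `Re(x) > 0` and `Re(s) > N`, the family
`(m₁,…,m_N) ↦ (x + m₁ + ⋯ + m_N)^{-s}` indexed by `m : Fin N → ℕ` is absolutely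
summable. -/
theorem barnes_summable (N : ℕ) (hN : 0 < N) (x s : ℂ) (hx : 0 < x.re)
    (hs : (N : ℝ) < s.re) :
    Summable fun m : Fin N → ℕ => ‖(x + ∑ j, (m j : ℂ)) ^ (-s)‖ := by
  set r : ℝ := s.re with hr
  have hr0 : 0 < r := lt_trans (by exact_mod_cast hN) hs
  set t : ℝ := r / N with ht
  have hN' : (0 : ℝ) < N := by exact_mod_cast hN
  have ht1 : 1 < t := (one_lt_div hN').mpr hs
  set c : ℝ := min x.re 1 with hc
  have hc0 : 0 < c := lt_min hx one_pos
  set C : ℝ := Real.exp (π / 2 * |s.im|) * c ^ (-r) with hC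
  -- summability of the dominating family
  have hfsum : Summable fun n : ℕ => ((1 : ℝ) + n) ^ (-t) := by
    have h1 : Summable fun n : ℕ => (n : ℝ) ^ (-t) :=
      Real.summable_nat_rpow.mpr (by linarith)
    have := (summable_nat_add_iff 1).mpr h1
    refine this.congr fun n => ?_
    push_cast
    ring_nf
  have hdom : Summable fun m : Fin N → ℕ => C * ∏ j, ((1 : ℝ) + m j) ^ (-t) :=
    (barnes_aux_prod_summable _ hfsum
      (fun n => Real.rpow_nonneg (by positivity) _) N).mul_left C
  refine Summable.of_nonneg_of_le (fun m => norm_nonneg _) (fun m => ?_) hdom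
  -- pointwise bound
  set z : ℂ := x + ∑ j, (m j : ℂ) with hz
  have hS : (0 : ℝ) ≤ ∑ j, (m j : ℝ) := Finset.sum_nonneg fun j _ => by positivity
  have hzre : z.re = x.re + ∑ j, (m j : ℝ) := by
    simp [hz]
  have hzre0 : 0 < z.re := by rw [hzre]; linarith
  have hzne : z ≠ 0 := fun h => by simp [h] at hzre0
  have habs : ‖z ^ (-s)‖ =
      ‖z‖ ^ (-s).re / Real.exp (z.arg * (-s).im) :=
    Complex.norm_cpow_of_ne_zero hzne _
  rw [show ‖z ^ (-s)‖ = ‖z ^ (-s)‖ from rfl, habs]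
  have harg : |z.arg| ≤ π / 2 := Complex.abs_arg_le_pi_div_two_iff.mpr hzre0.le
  -- bound the exponential factor
  have hexp : (Real.exp (π / 2 * |s.im|))⁻¹ ≤ Real.exp (z.arg * (-s).im) := by
    rw [← Real.exp_neg, Real.exp_le_exp]
    have h1 : |z.arg * (-s).im| ≤ π / 2 * |s.im| := by
      rw [abs_mul]
      have him : |(-s).im| = |s.im| := by simp
      rw [him]
      exact mul_le_mul_of_nonneg_right harg (abs_nonneg _)
    linarith [(abs_le.mp h1).1]
  have hexp0 : (0 : ℝ) < Real.exp (z.arg * (-s).im) := Real.exp_pos _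
  have step1 : ‖z‖ ^ (-s).re / Real.exp (z.arg * (-s).im) ≤
      ‖z‖ ^ (-r) * Real.exp (π / 2 * |s.im|) := by
    rw [div_le_iff₀ hexp0]
    have heq : (-s).re = -r := by simp [hr]
    rw [heq]
    have hbase : (0 : ℝ) ≤ ‖z‖ ^ (-r) := Real.rpow_nonneg (by positivity) _
    calc ‖z‖ ^ (-r)
        = ‖z‖ ^ (-r) * (Real.exp (π / 2 * |s.im|) * (Real.exp (π / 2 * |s.im|))⁻¹) := by
          rw [mul_inv_cancel₀ (Real.exp_pos _).ne', mul_one]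
      _ ≤ ‖z‖ ^ (-r) * (Real.exp (π / 2 * |s.im|) * Real.exp (z.arg * (-s).im)) := by
          gcongr
      _ = ‖z‖ ^ (-r) * Real.exp (π / 2 * |s.im|) * Real.exp (z.arg * (-s).im) := by
          ring
  refine step1.trans ?_
  -- bound abs z ^ (-r)
  have hle1 : c * (1 + ∑ j, (m j : ℝ)) ≤ ‖z‖ := by
    have h2 : c * (1 + ∑ j, (m j : ℝ)) ≤ z.re := by
      rw [hzre]
      have hcx : c ≤ x.re := min_le_left _ _
      have hc1 : c ≤ 1 := min_le_right _ _
      nlinarith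
    exact h2.trans (Complex.re_le_norm z)
  have hpos1 : (0 : ℝ) < c * (1 + ∑ j, (m j : ℝ)) := by positivity
  have step2 : ‖z‖ ^ (-r) ≤ (c * (1 + ∑ j, (m j : ℝ))) ^ (-r) :=
    Real.rpow_le_rpow_of_nonpos hpos1 hle1 (by linarith)
  have step3 : (c * (1 + ∑ j, (m j : ℝ))) ^ (-r) =
      c ^ (-r) * (1 + ∑ j, (m j : ℝ)) ^ (-r) :=
    Real.mul_rpow hc0.le (by positivity)
  -- AM-GM:  ∏ (1+mⱼ)^(1/N) ≤ 1 + ∑ mⱼ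
  have amgm : ∏ j, ((1 : ℝ) + m j) ^ ((1 : ℝ) / N) ≤ 1 + ∑ j, (m j : ℝ) := by
    have hAG := Real.geom_mean_le_arith_mean_weighted Finset.univ
      (fun _ : Fin N => (1 : ℝ) / N) (fun j => (1 : ℝ) + m j)
      (fun i _ => by positivity)
      (by rw [Finset.sum_const, Finset.card_univ, Fintype.card_fin, nsmul_eq_mul]; field_simp)
      (fun i _ => by positivity)
    refine hAG.trans ?_
    have : ∑ i : Fin N, (1 : ℝ) / N * (1 + m i) =
        1 + (∑ j, (m j : ℝ)) / N := by
      rw [← Finset.mul_sum, Finset.sum_add_distrib, Finset.sum_const, Finset.card_univ,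
        Fintype.card_fin]
      field_simp
      simp
    rw [this]
    have : (∑ j, (m j : ℝ)) / N ≤ ∑ j, (m j : ℝ) := by
      rw [div_le_iff₀ hN']
      have hN1 : (1 : ℝ) ≤ N := by exact_mod_cast hN
      nlinarith [hS, hN1]
    linarith
  have step4 : (1 + ∑ j, (m j : ℝ)) ^ (-r) ≤ ∏ j, ((1 : ℝ) + m j) ^ (-t) := by
    have hprod_pos : (0 : ℝ) < ∏ j, ((1 : ℝ) + m j) ^ ((1 : ℝ) / N) :=
      Finset.prod_pos fun j _ => Real.rpow_pos_of_pos (by positivity) _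
    have h5 : (∏ j, ((1 : ℝ) + m j) ^ ((1 : ℝ) / N)) ^ (-r) =
        ∏ j, ((1 : ℝ) + m j) ^ (-t) := by
      rw [← Real.finset_prod_rpow _ _ (fun j _ => Real.rpow_nonneg (by positivity) _)]
      refine Finset.prod_congr rfl fun j _ => ?_
      rw [← Real.rpow_mul (by positivity)]
      congr 1
      rw [ht]
      field_simp
    rw [← h5]
    exact Real.rpow_le_rpow_of_nonpos hprod_pos amgm (by linarith)
  calc ‖z‖ ^ (-r) * Real.exp (π / 2 * |s.im|)
      ≤ (c ^ (-r) * (1 + ∑ j, (m j : ℝ)) ^ (-r)) * Real.exp (π / 2 * |s.im|) := by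
        rw [← step3]; gcongr
    _ ≤ (c ^ (-r) * ∏ j, ((1 : ℝ) + m j) ^ (-t)) * Real.exp (π / 2 * |s.im|) := by
        gcongr
    _ = C * ∏ j, ((1 : ℝ) + m j) ^ (-t) := by rw [hC]; ring
end

section
/- (Mellin representation of the multiple Barnes–Euler zeta function.) Let N be a positive natural number, x a complex number with Re(x) > 0, and s a complex number with Re(s) > N. Then Σ over all N-tuples (m₁,…,m_N) of natural numbers of (-1)^{m₁+⋯+m_N} (x + m₁ + ⋯ + m_N)^{-s} equals (1/Γ(s)) · ∫_0^∞ t^{s-1} e^{-xt} (1 + e^{-t})^{-N} dt. -/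
open Complex MeasureTheory Set Filter

lemma geom_pi_summable_norm {𝕜 : Type*} [NormedField 𝕜] (N : ℕ) {z : 𝕜}
    (hz : ‖z‖ < 1) : Summable (fun m : Fin N → ℕ => ‖z‖ ^ ∑ j, m j) := by
  induction N with
  | zero => exact Summable.of_finite
  | succ k ih =>
    have h1 : Summable (fun p : ℕ × (Fin k → ℕ) => ‖z‖ ^ p.1 * ‖z‖ ^ ∑ j, p.2 j) :=
      Summable.mul_of_nonneg (f := fun n : ℕ => ‖z‖ ^ n)
        (g := fun m : Fin k → ℕ => ‖z‖ ^ ∑ j, m j)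
        (summable_geometric_of_lt_one (norm_nonneg z) hz) ih
        (fun n => pow_nonneg (norm_nonneg z) n) (fun m => pow_nonneg (norm_nonneg z) _)
    refine (Fin.consEquiv (fun _ : Fin (k+1) => ℕ)).summable_iff.mp ?_
    refine h1.congr fun p => ?_
    simp [Fin.consEquiv, Fin.sum_cons, pow_add]

lemma geom_pi_summable {𝕜 : Type*} [NormedField 𝕜] [CompleteSpace 𝕜] (N : ℕ) {z : 𝕜}
    (hz : ‖z‖ < 1) : Summable (fun m : Fin N → ℕ => z ^ ∑ j, m j) := by
  refine Summable.of_norm ?_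
  simpa [norm_pow] using geom_pi_summable_norm N hz

lemma geom_pi_tsum {𝕜 : Type*} [NormedField 𝕜] [CompleteSpace 𝕜] (N : ℕ) {z : 𝕜}
    (hz : ‖z‖ < 1) : ∑' m : Fin N → ℕ, z ^ ∑ j, m j = ((1 - z)⁻¹) ^ N := by
  induction N with
  | zero =>
    rw [tsum_eq_single (fun i => Fin.elim0 i) (fun b hb => absurd (Subsingleton.elim b _) hb)]
    simp
  | succ k ih =>
    have hf : Summable (fun n : ℕ => ‖z ^ n‖) := by
      simpa [norm_pow] using summable_geometric_of_lt_one (norm_nonneg z) hz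
    have hg : Summable (fun m : Fin k → ℕ => ‖z ^ ∑ j, m j‖) := by
      simpa [norm_pow] using geom_pi_summable_norm k hz
    have hmul := tsum_mul_tsum_of_summable_norm (f := fun n : ℕ => z ^ n)
      (g := fun m : Fin k → ℕ => z ^ ∑ j, m j) hf hg
    rw [← (Fin.consEquiv (fun _ : Fin (k+1) => ℕ)).tsum_eq]
    have hcongr : ∀ p : ℕ × (Fin k → ℕ),
        z ^ (∑ j, (Fin.consEquiv (fun _ : Fin (k+1) => ℕ)) p j) = z ^ p.1 * z ^ ∑ j, p.2 j := by
      intro p; simp [Fin.consEquiv, Fin.sum_cons, pow_add]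
    rw [tsum_congr hcongr, ← hmul, tsum_geometric_of_norm_lt_one hz, ih, pow_succ]
    ring

lemma integrableOn_cpow_mul_exp {s : ℂ} (hs : 0 < s.re) {a : ℂ} (ha : 0 < a.re) :
    IntegrableOn (fun t : ℝ => (t : ℂ) ^ (s - 1) * Complex.exp (-(a * t))) (Ioi (0:ℝ)) := by
  have hg : IntegrableOn (fun t : ℝ => t ^ (s.re - 1) * Real.exp (-a.re * t)) (Ioi (0:ℝ)) := by
    have := integrableOn_rpow_mul_exp_neg_mul_rpow (p := 1) (s := s.re - 1) (b := a.re)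
      (by linarith) zero_lt_one ha
    simpa [Real.rpow_one] using this
  have hmeas : AEStronglyMeasurable (fun t : ℝ => (t : ℂ) ^ (s - 1) * Complex.exp (-(a * t)))
      (volume.restrict (Ioi (0:ℝ))) := by
    refine Measurable.aestronglyMeasurable ?_
    fun_prop
  refine Integrable.mono' hg hmeas ?_
  refine (ae_restrict_iff' measurableSet_Ioi).mpr (Filter.Eventually.of_forall fun t ht => ?_)
  rw [norm_mul, Complex.norm_exp,
    Complex.norm_cpow_eq_rpow_re_of_pos ht]
  simp [Complex.sub_re, Complex.one_re, neg_mul, mul_comm]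

lemma integral_cpow_mul_exp_complex {s : ℂ} (hs : 0 < s.re) {a : ℂ} (ha : 0 < a.re) :
    ∫ t in Ioi (0:ℝ), (t : ℂ) ^ (s - 1) * Complex.exp (-(a * t)) =
      a ^ (-s) * Complex.Gamma s := by
  set U : Set ℂ := {z | 0 < z.re} with hU
  have hUo : IsOpen U := isOpen_lt continuous_const Complex.continuous_re
  set f : ℂ → ℂ := fun z => ∫ t in Ioi (0:ℝ), (t : ℂ) ^ (s - 1) * Complex.exp (-(z * t)) with hf
  set g : ℂ → ℂ := fun z => z ^ (-s) * Complex.Gamma s with hgdef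
  have hfd : DifferentiableOn ℂ f U := by
    intro z₀ hz₀
    have hz₀re : 0 < z₀.re := hz₀
    set ε : ℝ := z₀.re / 2 with hε
    have hεpos : 0 < ε := by positivity
    have key := hasDerivAt_integral_of_dominated_loc_of_deriv_le (μ := volume.restrict (Ioi (0:ℝ)))
      (F := fun (z : ℂ) (t : ℝ) => (t : ℂ) ^ (s - 1) * Complex.exp (-(z * t)))
      (F' := fun (z : ℂ) (t : ℝ) => (t : ℂ) ^ (s - 1) * (Complex.exp (-(z * t)) * (-t)))
      (x₀ := z₀) (bound := fun t : ℝ => t ^ s.re * Real.exp (-ε * t)) (Metric.ball_mem_nhds z₀ hεpos)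
      (Filter.Eventually.of_forall fun z => Measurable.aestronglyMeasurable (by fun_prop))
      (integrableOn_cpow_mul_exp hs hz₀re)
      (Measurable.aestronglyMeasurable (by fun_prop))
      ?_ ?_ ?_
    · exact (key.2.differentiableAt).differentiableWithinAt
    · refine (ae_restrict_iff' measurableSet_Ioi).mpr (Filter.Eventually.of_forall fun t ht => ?_)
      intro z hz
      have hzre : ε ≤ z.re := by
        have h1 : |(z - z₀).re| ≤ ‖z - z₀‖ := Complex.abs_re_le_norm _
        have h2 : ‖z - z₀‖ < ε := by
          rwa [Metric.mem_ball, dist_eq_norm] at hz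
        have := abs_le.mp (h1.trans h2.le) |>.1
        simp only [Complex.sub_re] at this
        simp only [hε] at this ⊢
        linarith
      have h3 : ‖(-(t:ℂ))‖ = t := by
        rw [norm_neg, Complex.norm_real, Real.norm_eq_abs, abs_of_pos ht]
      have h4 : (-(z * (t:ℂ))).re = -(z.re * t) := by simp
      rw [norm_mul, norm_mul, h3,
        Complex.norm_cpow_eq_rpow_re_of_pos ht, Complex.norm_exp, h4]
      have h5 : Real.exp (-(z.re * t)) ≤ Real.exp (-ε * t) := by
        apply Real.exp_le_exp.mpr
        have := mul_le_mul_of_nonneg_right hzre ht.le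
        linarith
      calc t ^ (s - 1).re * (Real.exp (-(z.re * t)) * t)
          = t ^ (s - 1).re * t * Real.exp (-(z.re * t)) := by ring
        _ = t ^ s.re * Real.exp (-(z.re * t)) := by
            rw [Complex.sub_re, Complex.one_re, ← Real.rpow_add_one ht.ne', sub_add_cancel]
        _ ≤ t ^ s.re * Real.exp (-ε * t) := by
            exact mul_le_mul_of_nonneg_left h5 (Real.rpow_nonneg ht.le _)
    · have := integrableOn_rpow_mul_exp_neg_mul_rpow (p := 1) (s := s.re) (b := ε)
        (by linarith) zero_lt_one hεpos
      simpa [Real.rpow_one, IntegrableOn] using this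
    · refine (ae_restrict_iff' measurableSet_Ioi).mpr (Filter.Eventually.of_forall fun t ht => ?_)
      intro z hz
      have h1 : HasDerivAt (fun z : ℂ => -(z * t)) (-(t:ℂ)) z := by
        simpa [Pi.neg_def] using ((hasDerivAt_id z).mul_const (t:ℂ)).neg
      exact (h1.cexp).const_mul _
  have hgd : DifferentiableOn ℂ g U := by
    intro z hz
    refine DifferentiableAt.differentiableWithinAt ?_
    apply DifferentiableAt.mul_const
    exact (differentiableAt_id.cpow (differentiableAt_const _) (Or.inl hz))
  have hfa : AnalyticOnNhd ℂ f U := hfd.analyticOnNhd hUo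
  have hga : AnalyticOnNhd ℂ g U := hgd.analyticOnNhd hUo
  have hUpre : IsPreconnected U := (convex_halfSpace_re_gt 0).isPreconnected
  have h1U : (1 : ℂ) ∈ U := by simp [hU]
  have hreal : ∀ r : ℝ, 0 < r → f (r : ℂ) = g (r : ℂ) := by
    intro r hr
    have := Complex.integral_cpow_mul_exp_neg_mul_Ioi hs hr
    rw [hf, hgdef]
    simp only
    rw [this, one_div,
      inv_cpow _ _ (by rw [Complex.arg_ofReal_of_nonneg hr.le]; exact Real.pi_ne_zero.symm),
      ← Complex.cpow_neg]
  have hfreq : ∃ᶠ z in nhdsWithin (1 : ℂ) {(1:ℂ)}ᶜ, f z = g z := by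
    set u : ℕ → ℂ := fun n => ((1 + ((n:ℝ)+1)⁻¹ : ℝ) : ℂ) with hu
    have htend : Filter.Tendsto u Filter.atTop (nhdsWithin (1 : ℂ) {(1:ℂ)}ᶜ) := by
      apply tendsto_nhdsWithin_of_tendsto_nhds_of_eventually_within
      · have h0 : Filter.Tendsto (fun n : ℕ => (1 + ((n:ℝ)+1)⁻¹ : ℝ)) Filter.atTop (nhds 1) := by
          have : Filter.Tendsto (fun n : ℕ => ((n:ℝ)+1)⁻¹) Filter.atTop (nhds 0) :=
            tendsto_one_div_add_atTop_nhds_zero_nat.congr (by intro n; rw [one_div])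
          simpa using (tendsto_const_nhds (x := (1:ℝ))).add this
        have := (Complex.continuous_ofReal.tendsto 1).comp h0
        exact this
      · refine Filter.Eventually.of_forall fun n => ?_
        simp only [Set.mem_compl_iff, Set.mem_singleton_iff, hu]
        rw [show (1 : ℂ) = ((1:ℝ):ℂ) by norm_num]
        intro h
        have h2 := Complex.ofReal_injective h
        have : (0:ℝ) < ((n:ℝ)+1)⁻¹ := by positivity
        linarith
    refine htend.frequently (Filter.Frequently.of_forall fun n => ?_)
    exact hreal _ (by positivity)
  have heq := hfa.eqOn_of_preconnected_of_frequently_eq hga hUpre h1U hfreq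
  exact heq ha

lemma integrable_poly_rpow_exp {b : ℝ} (hb : 0 < b) (n : ℕ) :
    ∀ a : ℝ, -1 < a →
    IntegrableOn (fun t : ℝ => (1+t)^n * (t ^ a * Real.exp (-b * t))) (Ioi (0:ℝ)) := by
  induction n with
  | zero =>
    intro a ha
    have := integrableOn_rpow_mul_exp_neg_mul_rpow (p := 1) (s := a) (b := b) ha zero_lt_one hb
    simpa [Real.rpow_one] using this
  | succ k ih =>
    intro a ha
    have h1 := ih a ha
    have h2 := ih (a+1) (by linarith)
    refine IntegrableOn.congr_fun (h1.add h2) (fun t ht => ?_) measurableSet_Ioi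
    have ht' : (0:ℝ) < t := ht
    simp only [Pi.add_apply]
    rw [Real.rpow_add_one ht'.ne']
    ring

/-- **Mellin representation of the multiple Barnes–Euler zeta function.** For `N ≥ 1`,
`Re(x) > 0` and `Re(s) > N`,
`Σ_{m : Fin N → ℕ} (-1)^{m₁+⋯+m_N} (x + m₁ + ⋯ + m_N)^{-s}
  = (1/Γ(s)) ∫_0^∞ t^{s-1} e^{-xt} (1 + e^{-t})^{-N} dt`. -/
theorem barnes_euler_mellin (N : ℕ) (hN : 0 < N) (x s : ℂ) (hx : 0 < x.re)
    (hs : (N : ℝ) < s.re) :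
    ∑' m : Fin N → ℕ, (-1 : ℂ) ^ (∑ j, m j) * (x + ∑ j, (m j : ℂ)) ^ (-s) =
      (1 / Complex.Gamma s) *
        ∫ t in Set.Ioi (0 : ℝ),
          (t : ℂ) ^ (s - 1) * Complex.exp (-x * t) *
            (1 + Complex.exp (-(t : ℂ))) ^ (-(N : ℤ)) := by
  have hNR : (0:ℝ) < N := by exact_mod_cast hN
  have hσ : 0 < s.re := lt_trans hNR hs
  set F : (Fin N → ℕ) → ℝ → ℂ := fun m t =>
    (-1 : ℂ) ^ (∑ j, m j) *
      ((t : ℂ) ^ (s - 1) * Complex.exp (-((x + (∑ j, m j : ℕ)) * t))) with hF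
  have hare : ∀ m : Fin N → ℕ, 0 < (x + ((∑ j, m j : ℕ) : ℂ)).re := by
    intro m
    simp only [Complex.add_re, Complex.natCast_re]
    positivity
  have hmeasF : ∀ m : Fin N → ℕ, Measurable (F m) := by
    intro m; rw [hF]; fun_prop
  have hnormF : ∀ (m : Fin N → ℕ) (t : ℝ), 0 < t →
      ‖F m t‖ = t ^ (s.re - 1) * Real.exp (-x.re * t) * Real.exp (-t) ^ (∑ j, m j) := by
    intro m t ht
    simp only [hF, norm_mul, norm_pow, norm_neg, norm_one, one_pow, one_mul]
    rw [Complex.norm_cpow_eq_rpow_re_of_pos ht,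
      Complex.norm_exp]
    have h1 : (-((x + ((∑ j, m j : ℕ) : ℂ)) * t)).re = -x.re * t + (∑ j, m j : ℕ) * (-t) := by
      simp
      ring
    rw [h1, Real.exp_add, Real.exp_nat_mul, Complex.sub_re, Complex.one_re, mul_assoc]
  have hexp_lt : ∀ t : ℝ, 0 < t → Real.exp (-t) < 1 := by
    intro t ht
    rw [← Real.exp_zero]
    exact Real.exp_lt_exp.mpr (by linarith)
  have hpt : ∀ t ∈ Ioi (0:ℝ), ∑' m, F m t =
      (t : ℂ) ^ (s - 1) * Complex.exp (-x * t) * (1 + Complex.exp (-(t : ℂ))) ^ (-(N : ℤ)) := by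
    intro t ht
    have ht' : (0:ℝ) < t := ht
    have hz : ‖-Complex.exp (-(t:ℂ))‖ < 1 := by
      rw [norm_neg, Complex.norm_exp]
      simp only [Complex.neg_re, Complex.ofReal_re]
      exact hexp_lt t ht'
    have hFeq : ∀ m : Fin N → ℕ, F m t =
        ((t : ℂ) ^ (s - 1) * Complex.exp (-x * t)) * (-Complex.exp (-(t:ℂ))) ^ (∑ j, m j) := by
      intro m
      simp only [hF]
      have h1 : -((x + ((∑ j, m j : ℕ) : ℂ)) * t) = -x * t + (∑ j, m j : ℕ) * (-(t:ℂ)) := by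
        push_cast
        ring
      rw [h1, Complex.exp_add, Complex.exp_nat_mul, neg_pow (Complex.exp (-(t:ℂ)))]
      ring
    rw [tsum_congr hFeq, tsum_mul_left, geom_pi_tsum N hz]
    rw [sub_neg_eq_add, zpow_neg, zpow_natCast, inv_pow]
  have hterm : ∀ m : Fin N → ℕ, ∫ t in Ioi (0:ℝ), F m t =
      Complex.Gamma s * ((-1 : ℂ) ^ (∑ j, m j) * (x + ((∑ j, m j : ℕ) : ℂ)) ^ (-s)) := by
    intro m
    simp only [hF]
    rw [MeasureTheory.integral_const_mul, integral_cpow_mul_exp_complex hσ (hare m)]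
    ring
  have hsummable_norm : ∀ t : ℝ, 0 < t → Summable (fun m : Fin N → ℕ =>
      t ^ (s.re - 1) * Real.exp (-x.re * t) * Real.exp (-t) ^ (∑ j, m j)) := by
    intro t ht
    have hr1 : ‖Real.exp (-t)‖ < 1 := by
      rw [Real.norm_eq_abs, abs_of_pos (Real.exp_pos _)]
      exact hexp_lt t ht
    exact (geom_pi_summable (𝕜 := ℝ) N hr1).mul_left _
  set H : ℝ → ℝ := fun t => (1+t)^N * (t ^ (s.re - 1 - N) * Real.exp (-x.re * t)) with hHdef
  have hH : IntegrableOn H (Ioi (0:ℝ)) :=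
    integrable_poly_rpow_exp hx N _ (by push_cast; linarith)
  have hbound : ∀ t ∈ Ioi (0:ℝ), ∑' m : Fin N → ℕ, (‖F m t‖₊ : ENNReal) ≤
      ENNReal.ofReal (H t) := by
    intro t ht
    have ht' : (0:ℝ) < t := ht
    have hr1 : ‖Real.exp (-t)‖ < 1 := by
      rw [Real.norm_eq_abs, abs_of_pos (Real.exp_pos _)]
      exact hexp_lt t ht'
    have h1 : ∀ m : Fin N → ℕ, (‖F m t‖₊ : ENNReal) =
        ENNReal.ofReal (t ^ (s.re - 1) * Real.exp (-x.re * t) * Real.exp (-t) ^ (∑ j, m j)) := by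
      intro m
      rw [← enorm_eq_nnnorm, ← ofReal_norm, hnormF m t ht']
    rw [tsum_congr h1,
      ← ENNReal.ofReal_tsum_of_nonneg (fun m => by positivity) (hsummable_norm t ht')]
    apply ENNReal.ofReal_le_ofReal
    rw [tsum_mul_left, geom_pi_tsum N hr1]
    have he : Real.exp (-t) ≤ (1+t)⁻¹ := by
      have h2 := Real.add_one_le_exp t
      rw [Real.exp_neg]
      exact inv_anti₀ (by linarith) (by linarith)
    have hlow : t/(1+t) ≤ 1 - Real.exp (-t) := by
      have h3 : 1 - (1+t)⁻¹ = t/(1+t) := by field_simp; ring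
      linarith
    have hposf : (0:ℝ) < t/(1+t) := by positivity
    have hinv : (1 - Real.exp (-t))⁻¹ ≤ (1+t)/t := by
      have := inv_anti₀ hposf hlow
      rwa [inv_div] at this
    have hipos : (0:ℝ) ≤ (1 - Real.exp (-t))⁻¹ := by
      have : (0:ℝ) < 1 - Real.exp (-t) := lt_of_lt_of_le hposf hlow
      positivity
    have hpow : ((1 - Real.exp (-t))⁻¹)^N ≤ ((1+t)/t)^N := pow_le_pow_left₀ hipos hinv N
    calc t ^ (s.re - 1) * Real.exp (-x.re * t) * ((1 - Real.exp (-t))⁻¹)^N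
        ≤ t ^ (s.re - 1) * Real.exp (-x.re * t) * ((1+t)/t)^N := by
          exact mul_le_mul_of_nonneg_left hpow (by positivity)
      _ = H t := by
          simp only [hHdef]
          have hsplit : t ^ (s.re - 1 - (N:ℝ)) = t ^ (s.re - 1) / t ^ (N:ℕ) := by
            rw [Real.rpow_sub ht', Real.rpow_natCast]
          rw [hsplit, div_pow]
          have htN : (t:ℝ)^N ≠ 0 := pow_ne_zero _ ht'.ne'
          field_simp
  have hfin : ∑' m : Fin N → ℕ, ∫⁻ t in Ioi (0:ℝ), (‖F m t‖₊ : ENNReal) ≠ ⊤ := by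
    rw [← lintegral_tsum (fun m => ((hmeasF m).nnnorm.coe_nnreal_ennreal).aemeasurable)]
    have hHmeas : Measurable (fun t : ℝ => ENNReal.ofReal (H t)) := by
      rw [hHdef]
      apply ENNReal.measurable_ofReal.comp
      fun_prop
    have hle := setLIntegral_mono (μ := volume) hHmeas hbound
    have hHfin : ∫⁻ t in Ioi (0:ℝ), ENNReal.ofReal (H t) < ⊤ := by
      calc ∫⁻ t in Ioi (0:ℝ), ENNReal.ofReal (H t)
          ≤ ∫⁻ t in Ioi (0:ℝ), (‖H t‖₊ : ENNReal) :=
            lintegral_mono fun t => Real.ofReal_le_enorm _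
        _ < ⊤ := hH.hasFiniteIntegral
    exact ne_top_of_le_ne_top hHfin.ne hle
  have hGne : Complex.Gamma s ≠ 0 := Complex.Gamma_ne_zero_of_re_pos hσ
  have h2 : ∫ t in Ioi (0:ℝ),
      (t : ℂ) ^ (s - 1) * Complex.exp (-x * t) * (1 + Complex.exp (-(t : ℂ))) ^ (-(N : ℤ)) =
      ∑' m : Fin N → ℕ, ∫ t in Ioi (0:ℝ), F m t := by
    calc ∫ t in Ioi (0:ℝ),
        (t : ℂ) ^ (s - 1) * Complex.exp (-x * t) * (1 + Complex.exp (-(t : ℂ))) ^ (-(N : ℤ))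
        = ∫ t in Ioi (0:ℝ), ∑' m : Fin N → ℕ, F m t :=
          setIntegral_congr_fun measurableSet_Ioi (fun t ht => (hpt t ht).symm)
      _ = ∑' m : Fin N → ℕ, ∫ t in Ioi (0:ℝ), F m t :=
          integral_tsum (fun m => (hmeasF m).aestronglyMeasurable) hfin
  rw [h2, tsum_congr hterm, tsum_mul_left, ← mul_assoc, one_div, inv_mul_cancel₀ hGne, one_mul]
  refine tsum_congr fun m => ?_
  congr 2
  push_cast
  ring
end
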